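/- arXiv:1709.07966 — 4 statements merged into one kernel-verified Lean document; each statement's English description precedes it below -/
import Mathlib

section
/- Every polynomial p ∈ ℝ[x_1,...,x_n] that is nonnegative on all points of {0,1}^n is a sum of squares of polynomials modulo the ideal I_01; i.e., there exist polynomials q_1,...,q_r such that p - ∑_k q_k² ∈ I_01. -/
open MvPolynomial Finset

noncomputable def I01 (n : ℕ) : Ideal (MvPolynomial (Fin n) ℝ) :=
  Ideal.span (Set.range fun i : Fin n => X i ^ 2 - X i)

lemma finSuccEquiv_rename_succ (n : ℕ) (c : MvPolynomial (Fin n) ℝ) :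
    MvPolynomial.finSuccEquiv ℝ n (rename Fin.succ c) = Polynomial.C c := by
  induction c using MvPolynomial.induction_on with
  | C a => simp [MvPolynomial.finSuccEquiv_apply]
  | add p q hp hq => simp [map_add, hp, hq]
  | mul_X p i hp => simp [map_mul, hp, MvPolynomial.finSuccEquiv_X_succ]

lemma rename_succ_mem_I01 (n : ℕ) (c : MvPolynomial (Fin n) ℝ) (hc : c ∈ I01 n) :
    rename Fin.succ c ∈ I01 (n + 1) := by
  have h1 : rename Fin.succ c ∈ Ideal.map (rename (R := ℝ) Fin.succ).toRingHom (I01 n) :=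
    Ideal.mem_map_of_mem _ hc
  refine Ideal.map_le_iff_le_comap.mpr ?_ h1
  rw [I01, Ideal.span_le]
  rintro x ⟨i, rfl⟩
  simp only [SetLike.mem_coe, Ideal.mem_comap]
  have h : (rename (R := ℝ) Fin.succ).toRingHom (X i ^ 2 - X i) = X i.succ ^ 2 - X i.succ := by
    simp
  rw [h]
  exact Ideal.subset_span ⟨i.succ, rfl⟩

lemma eval_cube_zero_mem_I01 : ∀ (n : ℕ) (f : MvPolynomial (Fin n) ℝ),
    (∀ z : Fin n → ℝ, (∀ i, z i = 0 ∨ z i = 1) → eval z f = 0) → f ∈ I01 n := by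
  intro n
  induction n with
  | zero =>
    intro f hf
    have h0 : f = C (f.coeff 0) := eq_C_of_isEmpty f
    have h1 : eval (fun i : Fin 0 => i.elim0) f = 0 := hf _ (fun i => i.elim0)
    rw [h0] at h1 ⊢
    rw [eval_C] at h1
    rw [h1, map_zero]
    exact zero_mem _
  | succ n ih =>
    intro f hf
    set E := MvPolynomial.finSuccEquiv ℝ n with hE
    set g : Polynomial (MvPolynomial (Fin n) ℝ) := Polynomial.X ^ 2 - Polynomial.X with hgdef
    have hg : g.Monic := by
      apply Polynomial.monic_X_pow_sub
      simpa using (by norm_num : (1 : WithBot ℕ) < 2)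
    have hdeg : (E f %ₘ g).degree ≤ 1 := by
      have h2 : g.degree = 2 := by
        rw [hgdef]
        compute_degree!
      have hlt := Polynomial.degree_modByMonic_lt (E f) hg
      rw [h2] at hlt
      cases hd : (E f %ₘ g).degree with
      | bot => exact bot_le
      | coe m =>
        rw [hd] at hlt
        have hm : m < 2 := by
          rw [show (2 : WithBot ℕ) = ((2 : ℕ) : WithBot ℕ) from rfl] at hlt
          exact WithBot.coe_lt_coe.mp hlt
        rw [show (1 : WithBot ℕ) = ((1 : ℕ) : WithBot ℕ) from rfl]
        exact WithBot.coe_le_coe.mpr (Nat.lt_succ_iff.mp hm)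
    set a := (E f %ₘ g).coeff 1 with ha
    set b := (E f %ₘ g).coeff 0 with hb
    have hr : E f %ₘ g = Polynomial.C a * Polynomial.X + Polynomial.C b :=
      Polynomial.eq_X_add_C_of_degree_le_one hdeg
    have hsymmC : ∀ c : MvPolynomial (Fin n) ℝ, E.symm (Polynomial.C c) = rename Fin.succ c :=
      fun c => E.symm_apply_eq.mpr (finSuccEquiv_rename_succ n c).symm
    have hsymmX : E.symm Polynomial.X = X 0 :=
      E.symm_apply_eq.mpr MvPolynomial.finSuccEquiv_X_zero.symm
    have hsymmg : E.symm g = X 0 ^ 2 - X 0 := by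
      rw [hgdef, map_sub, map_pow, hsymmX]
    have key : E f = g * (E f /ₘ g) + (Polynomial.C a * Polynomial.X + Polynomial.C b) := by
      rw [← hr]
      exact ((Polynomial.modByMonic_add_div (E f) g).symm).trans (add_comm _ _)
    have hdecomp : f = (X 0 ^ 2 - X 0) * E.symm (E f /ₘ g)
        + (rename Fin.succ a * X 0 + rename Fin.succ b) := by
      have h1 := congrArg E.symm key
      rw [E.symm_apply_apply, map_add, map_mul, map_add, map_mul, hsymmg, hsymmC, hsymmC,
        hsymmX] at h1
      exact h1
    -- evaluation of f at Fin.cons y z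
    have heval : ∀ (y : ℝ) (z : Fin n → ℝ), (y = 0 ∨ y = 1) → (∀ i, z i = 0 ∨ z i = 1) →
        (y ^ 2 - y) * eval (Fin.cons y z : Fin (n + 1) → ℝ) (E.symm (E f /ₘ g))
          + (eval z a * y + eval z b) = 0 := by
      intro y z hy hz
      have hcube : ∀ i : Fin (n+1), (Fin.cons y z : Fin (n + 1) → ℝ) i = 0 ∨
          (Fin.cons y z : Fin (n + 1) → ℝ) i = 1 := by
        intro i
        refine Fin.cases ?_ ?_ i
        · simpa using hy
        · intro j; simpa using hz j
      have h0 := hf (Fin.cons y z) hcube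
      rw [hdecomp] at h0
      have hcomp : (Fin.cons y z : Fin (n+1) → ℝ) ∘ Fin.succ = z := by
        funext j; simp
      simpa [map_add, map_mul, map_sub, map_pow, eval_rename, hcomp] using h0
    have hbz : ∀ z : Fin n → ℝ, (∀ i, z i = 0 ∨ z i = 1) → eval z b = 0 := by
      intro z hz
      have := heval 0 z (Or.inl rfl) hz
      simpa using this
    have haz : ∀ z : Fin n → ℝ, (∀ i, z i = 0 ∨ z i = 1) → eval z a = 0 := by
      intro z hz
      have := heval 1 z (Or.inr rfl) hz
      have hb0 := hbz z hz
      simp [hb0] at this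
      linarith [this]
    have hamem := rename_succ_mem_I01 n a (ih a haz)
    have hbmem := rename_succ_mem_I01 n b (ih b hbz)
    have hXmem : (X 0 ^ 2 - X 0 : MvPolynomial (Fin (n+1)) ℝ) ∈ I01 (n+1) :=
      Ideal.subset_span ⟨0, rfl⟩
    rw [hdecomp]
    exact add_mem (Ideal.mul_mem_right _ _ hXmem)
      (add_mem (Ideal.mul_mem_right _ _ hamem) hbmem)

theorem nonneg_on_cube_is_sos_mod_I01 (n : ℕ) (p : MvPolynomial (Fin n) ℝ)
    (hp : ∀ z : Fin n → ℝ, (∀ i, z i = 0 ∨ z i = 1) → 0 ≤ eval z p) :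
    ∃ (r : ℕ) (q : Fin r → MvPolynomial (Fin n) ℝ),
      p - ∑ k, (q k) ^ 2 ∈ I01 n := by
  classical
  -- cube point associated to a boolean vector
  set zb : (Fin n → Bool) → (Fin n → ℝ) := fun b i => if b i then 1 else 0 with hzb
  -- indicator polynomial
  set e : (Fin n → Bool) → MvPolynomial (Fin n) ℝ :=
    fun b => ∏ i, if b i then X i else 1 - X i with he
  set Q : (Fin n → Bool) → MvPolynomial (Fin n) ℝ :=
    fun b => C (Real.sqrt (eval (zb b) p)) * e b with hQ
  have hzbcube : ∀ b, ∀ i, zb b i = 0 ∨ zb b i = 1 := by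
    intro b i
    by_cases h : b i <;> simp [hzb, h]
  -- evaluation of e b at a cube point zb b'
  have heval_e : ∀ b b' : Fin n → Bool,
      eval (zb b') (e b) = if b = b' then 1 else 0 := by
    intro b b'
    rw [he]
    simp only [map_prod]
    have hfac : ∀ i, eval (zb b') (if b i then X i else 1 - X i)
        = if b i = b' i then 1 else 0 := by
      intro i
      by_cases h : b i <;> by_cases h' : b' i <;> simp [h, h', hzb]
    simp only [hfac]
    by_cases hbb : b = b'
    · subst hbb; simp
    · have : ∃ i, b i ≠ b' i := by
        by_contra hcon
        push_neg at hcon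
        exact hbb (funext hcon)
      obtain ⟨i, hi⟩ := this
      rw [if_neg hbb]
      exact Finset.prod_eq_zero (Finset.mem_univ i) (by simp [hi])
  -- the sum of squares agrees with p on the cube
  have hvanish : ∀ z : Fin n → ℝ, (∀ i, z i = 0 ∨ z i = 1) →
      eval z (p - ∑ b : Fin n → Bool, (Q b) ^ 2) = 0 := by
    intro z hz
    set b' : Fin n → Bool := fun i => z i = 1 with hb'
    have hzeq : z = zb b' := by
      funext i
      rcases hz i with h | h <;> simp [hzb, hb', h]
    rw [map_sub, map_sum]
    have hterm : ∀ b : Fin n → Bool,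
        eval z ((Q b) ^ 2) = if b = b' then eval z p else 0 := by
      intro b
      rw [hQ]
      simp only [map_pow, map_mul, eval_C]
      rw [hzeq, heval_e b b']
      by_cases hbb : b = b'
      · rw [if_pos hbb, if_pos hbb, hbb, mul_one, Real.sq_sqrt (hp (zb b') (hzbcube b'))]
      · rw [if_neg hbb, if_neg hbb]; ring
    simp only [hterm]
    rw [Finset.sum_ite_eq' Finset.univ b' (fun _ => eval z p)]
    simp
  have hmem := eval_cube_zero_mem_I01 n (p - ∑ b : Fin n → Bool, (Q b) ^ 2) hvanish
  refine ⟨Fintype.card (Fin n → Bool), fun k => Q ((Fintype.equivFin (Fin n → Bool)).symm k), ?_⟩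
  have hsum : ∑ k, (Q ((Fintype.equivFin (Fin n → Bool)).symm k)) ^ 2
      = ∑ b : Fin n → Bool, (Q b) ^ 2 :=
    Fintype.sum_equiv (Fintype.equivFin (Fin n → Bool)).symm _ _ (fun k => rfl)
  rw [hsum]
  exact hmem
end

section
/- (SoS certificates over the Boolean hypercube.) Let F = {x ∈ {0,1}^n : g_j(x) ≥ 0 for j=1,...,m} for polynomials g_1,...,g_m, and suppose that for every z ∈ {0,1}^n \ F there exists some j with g_j(z) < 0 (i.e. F is exactly the set of hypercube points satisfying all constraints). Then every polynomial p nonnegative on F can be written as p = s_0 + ∑_{j=1}^m s_j · g_j + h, where each s_j is a sum of squares of polynomials and h ∈ I_01. -/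
open MvPolynomial Finset

/-- `p` is a sum of squares of polynomials. -/
def IsSOS {n : ℕ} (p : MvPolynomial (Fin n) ℝ) : Prop :=
  ∃ (r : ℕ) (q : Fin r → MvPolynomial (Fin n) ℝ), p = ∑ k, (q k) ^ 2


lemma eval_I01 {n : ℕ} {q : MvPolynomial (Fin n) ℝ} (hq : q ∈ I01 n)
    {z : Fin n → ℝ} (hz : ∀ i, z i = 0 ∨ z i = 1) : eval z q = 0 := by
  have hle : I01 n ≤ RingHom.ker (eval z) := by
    rw [I01, Ideal.span_le]
    rintro _ ⟨i, rfl⟩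
    simp only [SetLike.mem_coe, RingHom.mem_ker, map_sub, map_pow, eval_X]
    rcases hz i with h | h <;> simp [h]
  simpa [RingHom.mem_ker] using hle hq

lemma X_pow_mk {n : ℕ} (i : Fin n) (k : ℕ) (hk : 1 ≤ k) :
    Ideal.Quotient.mk (I01 n) (X i ^ k) = Ideal.Quotient.mk (I01 n) (X i) := by
  induction k with
  | zero => omega
  | succ k ih =>
    rcases Nat.lt_or_ge 1 (k+1) with h | h
    · have hk1 : 1 ≤ k := by omega
      have hx : (X i : MvPolynomial (Fin n) ℝ) ^ (k+1) = X i ^ k * X i := by ring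
      rw [hx, map_mul, ih hk1, ← map_mul]
      rw [Ideal.Quotient.eq]
      have : (X i : MvPolynomial (Fin n) ℝ) * X i - X i = X i ^ 2 - X i := by ring
      rw [this, I01]
      exact Ideal.subset_span ⟨i, rfl⟩
    · have : k = 0 := by omega
      subst this; rw [pow_one]

lemma multilinear_eq_zero {n : ℕ} {q : MvPolynomial (Fin n) ℝ}
    (hml : ∀ β ∈ q.support, ∀ i, β i ≤ 1)
    (h : ∀ z : Fin n → ℝ, (∀ i, z i = 0 ∨ z i = 1) → eval z q = 0) : q = 0 := by
  classical
  by_contra hq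
  obtain ⟨α, hα, hmin⟩ :=
    Finset.exists_min_image q.support (fun β => β.support.card)
      (support_nonempty.mpr hq)
  set z : Fin n → ℝ := fun i => if α i = 0 then 0 else 1 with hzdef
  have hz : ∀ i, z i = 0 ∨ z i = 1 := fun i => by
    by_cases hi : α i = 0 <;> simp [hzdef, hi]
  have heval : eval z q = coeff α q := by
    rw [eval_eq]
    rw [Finset.sum_eq_single α]
    · have h1 : ∀ i ∈ α.support, z i ^ α i = 1 := fun i hi => by
        have : α i ≠ 0 := Finsupp.mem_support_iff.mp hi
        simp [hzdef, this]
      rw [Finset.prod_congr rfl h1]; simp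
    · intro β hβ hne
      by_cases hsub : β.support ⊆ α.support
      · exfalso; apply hne
        have hEq : β.support = α.support :=
          Finset.eq_of_subset_of_card_le hsub (hmin β hβ)
        ext i
        by_cases hi : i ∈ α.support
        · have hb : β i = 1 := le_antisymm (hml β hβ i)
            (Nat.one_le_iff_ne_zero.mpr (Finsupp.mem_support_iff.mp (hEq ▸ hi)))
          have ha : α i = 1 := le_antisymm (hml α hα i)
            (Nat.one_le_iff_ne_zero.mpr (Finsupp.mem_support_iff.mp hi))
          rw [hb, ha]
        · have hb : β i = 0 := Finsupp.notMem_support_iff.mp (hEq ▸ hi)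
          have ha : α i = 0 := Finsupp.notMem_support_iff.mp hi
          rw [hb, ha]
      · obtain ⟨i, hiβ, hiα⟩ := Finset.not_subset.mp hsub
        have hzi : z i = 0 := by simp [hzdef, Finsupp.notMem_support_iff.mp hiα]
        have : z i ^ β i = 0 := by
          rw [hzi]; exact zero_pow (Finsupp.mem_support_iff.mp hiβ)
        rw [Finset.prod_eq_zero hiβ this]; ring
    · intro hna; exact absurd hα hna
  exact MvPolynomial.mem_support_iff.mp hα (by rw [← heval, h z hz])

lemma mem_I01_of_vanish {n : ℕ} {q : MvPolynomial (Fin n) ℝ}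
    (h : ∀ z : Fin n → ℝ, (∀ i, z i = 0 ∨ z i = 1) → eval z q = 0) : q ∈ I01 n := by
  classical
  set ml : (Fin n →₀ ℕ) → (Fin n →₀ ℕ) :=
    fun α => α.mapRange (fun k => min k 1) (by simp) with hmldef
  set q' : MvPolynomial (Fin n) ℝ :=
    ∑ α ∈ q.support, monomial (ml α) (coeff α q) with hq'def
  have hcong : q - q' ∈ I01 n := by
    rw [← Ideal.Quotient.eq]
    conv_lhs => rw [q.as_sum]
    rw [map_sum, map_sum]
    refine Finset.sum_congr rfl fun α hα => ?_
    rw [monomial_eq, monomial_eq, map_mul, map_mul]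
    congr 1
    have hsupp : (ml α).support = α.support := by
      ext i
      simp only [hmldef, Finsupp.mem_support_iff, Finsupp.mapRange_apply, ne_eq]
      omega
    rw [Finsupp.prod, Finsupp.prod, hsupp, map_prod, map_prod]
    refine Finset.prod_congr rfl fun i hi => ?_
    have h1 : 1 ≤ α i := Nat.one_le_iff_ne_zero.mpr (Finsupp.mem_support_iff.mp hi)
    have h2 : (ml α) i = 1 := by
      simp only [hmldef, Finsupp.mapRange_apply]
      omega
    rw [h2, X_pow_mk i (α i) h1, pow_one]
  have hml : ∀ β ∈ q'.support, ∀ i, β i ≤ 1 := by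
    intro β hβ i
    rw [hq'def] at hβ
    have h1 := MvPolynomial.support_sum hβ
    obtain ⟨α, _, hβα⟩ := Finset.mem_biUnion.mp h1
    have : β = ml α := Finset.mem_singleton.mp (support_monomial_subset hβα)
    subst this
    simp only [hmldef, Finsupp.mapRange_apply]
    omega
  have hvan' : ∀ z : Fin n → ℝ, (∀ i, z i = 0 ∨ z i = 1) → eval z q' = 0 := by
    intro z hz
    have h1 := eval_I01 hcong hz
    have h2 := h z hz
    rw [map_sub] at h1
    linarith
  have hz : q' = 0 := multilinear_eq_zero hml hvan'
  simpa [hz] using hcong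



section
variable {n : ℕ}

noncomputable def pt (σ : Fin n → Bool) : Fin n → ℝ := fun i => if σ i then 1 else 0

noncomputable def delta (σ : Fin n → Bool) : MvPolynomial (Fin n) ℝ :=
  ∏ i, if σ i then X i else 1 - X i

lemma pt_cube (σ : Fin n → Bool) : ∀ i, pt σ i = 0 ∨ pt σ i = 1 := fun i => by
  unfold pt; by_cases h : σ i <;> simp [h]

lemma eval_delta (σ τ : Fin n → Bool) :
    eval (pt τ) (delta σ) = if σ = τ then 1 else 0 := by
  unfold delta
  rw [map_prod]
  by_cases h : σ = τ
  · subst h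
    rw [if_pos rfl]
    apply Finset.prod_eq_one
    intro i _
    by_cases hi : σ i <;> simp [hi, pt]
  · rw [if_neg h]
    obtain ⟨i, hi⟩ := Function.ne_iff.mp h
    apply Finset.prod_eq_zero (Finset.mem_univ i)
    rcases Bool.eq_false_or_eq_true (σ i) with hσ | hσ <;>
      rcases Bool.eq_false_or_eq_true (τ i) with hτ | hτ <;>
        simp_all [pt]

lemma isSOS_fintype_sum {ι : Type} [Fintype ι] (f : ι → MvPolynomial (Fin n) ℝ) :
    IsSOS (∑ i, (f i) ^ 2) := by
  refine ⟨Fintype.card ι, f ∘ (Fintype.equivFin ι).symm, ?_⟩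
  rw [← Equiv.sum_comp (Fintype.equivFin ι).symm (fun i => (f i) ^ 2)]
  rfl

end

theorem sos_certificate_over_cube (n m : ℕ) (g : Fin m → MvPolynomial (Fin n) ℝ)
    (F : Set (Fin n → ℝ))
    (hF : F = {z : Fin n → ℝ | (∀ i, z i = 0 ∨ z i = 1) ∧ ∀ j, 0 ≤ eval z (g j)})
    (p : MvPolynomial (Fin n) ℝ) (hp : ∀ z ∈ F, 0 ≤ eval z p) :
    ∃ (s₀ : MvPolynomial (Fin n) ℝ) (s : Fin m → MvPolynomial (Fin n) ℝ)
      (h : MvPolynomial (Fin n) ℝ),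
      IsSOS s₀ ∧ (∀ j, IsSOS (s j)) ∧ h ∈ I01 n ∧
      p = s₀ + ∑ j, s j * g j + h := by
  classical
  have key : ∀ σ : Fin n → Bool, ∃ c : ℝ × (Fin m → ℝ),
      0 ≤ c.1 ∧ (∀ j, 0 ≤ c.2 j) ∧
      eval (pt σ) p = c.1 + ∑ j, c.2 j * eval (pt σ) (g j) := by
    intro σ
    by_cases hσ : ∀ j, 0 ≤ eval (pt σ) (g j)
    · refine ⟨⟨eval (pt σ) p, 0⟩, ?_, by simp, by simp⟩
      apply hp
      rw [hF]
      exact ⟨pt_cube σ, hσ⟩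
    · push_neg at hσ
      obtain ⟨j0, hj0⟩ := hσ
      refine ⟨⟨max (eval (pt σ) p) 0,
        fun j => if j = j0 then min (eval (pt σ) p) 0 / eval (pt σ) (g j0) else 0⟩,
        le_max_right _ _, ?_, ?_⟩
      · intro j
        dsimp only
        rcases eq_or_ne j j0 with rfl | hne
        · rw [if_pos rfl]
          exact div_nonneg_iff.mpr (Or.inr ⟨min_le_right _ _, hj0.le⟩)
        · rw [if_neg hne]
      · have hsum : ∑ j, (if j = j0 then min (eval (pt σ) p) 0 / eval (pt σ) (g j0) else 0)
            * eval (pt σ) (g j) = min (eval (pt σ) p) 0 := by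
          rw [Finset.sum_eq_single j0]
          · rw [if_pos rfl, div_mul_cancel₀ _ (ne_of_lt hj0)]
          · intro j _ hne
            rw [if_neg hne, zero_mul]
          · intro hj; exact absurd (Finset.mem_univ j0) hj
        rw [hsum]
        have := max_add_min (eval (pt σ) p) 0
        dsimp only
        linarith
  choose c hc0 hcj hsum using key
  set s₀ : MvPolynomial (Fin n) ℝ :=
    ∑ σ : Fin n → Bool, (C (Real.sqrt (c σ).1) * delta σ) ^ 2 with hs₀
  set s : Fin m → MvPolynomial (Fin n) ℝ :=
    fun j => ∑ σ : Fin n → Bool, (C (Real.sqrt ((c σ).2 j)) * delta σ) ^ 2 with hs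
  refine ⟨s₀, s, p - (s₀ + ∑ j, s j * g j), isSOS_fintype_sum _,
    fun j => isSOS_fintype_sum _, ?_, by ring⟩
  apply mem_I01_of_vanish
  intro z hz
  set τ : Fin n → Bool := fun i => if z i = 1 then true else false with hτ
  have hzpt : pt τ = z := by
    funext i
    rcases hz i with h | h
    · have ht : τ i = false := by norm_num [hτ, h]
      simp [pt, ht, h]
    · have ht : τ i = true := by norm_num [hτ, h]
      simp [pt, ht, h]
  have ev_term : ∀ (a : ℝ) (σ : Fin n → Bool), 0 ≤ a →
      eval (pt τ) ((C (Real.sqrt a) * delta σ) ^ 2) = if σ = τ then a else 0 := by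
    intro a σ ha
    rw [mul_pow, map_mul, map_pow, map_pow, eval_C, eval_delta]
    rcases eq_or_ne σ τ with rfl | hne
    · simp [Real.sq_sqrt ha]
    · simp [hne]
  have evs₀ : eval z s₀ = (c τ).1 := by
    rw [← hzpt, hs₀, map_sum, Finset.sum_eq_single τ]
    · rw [ev_term _ _ (hc0 τ), if_pos rfl]
    · intro σ _ hne
      rw [ev_term _ _ (hc0 σ), if_neg hne]
    · intro hτ'; exact absurd (Finset.mem_univ τ) hτ'
  have evs : ∀ j, eval z (s j) = (c τ).2 j := by
    intro j
    rw [← hzpt, hs, map_sum, Finset.sum_eq_single τ]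
    · rw [ev_term _ _ (hcj τ j), if_pos rfl]
    · intro σ _ hne
      rw [ev_term _ _ (hcj σ j), if_neg hne]
    · intro hτ'; exact absurd (Finset.mem_univ τ) hτ'
  have hfin := hsum τ
  rw [hzpt] at hfin
  rw [map_sub, map_add, evs₀, map_sum]
  have : ∀ j ∈ Finset.univ, eval z (s j * g j) = (c τ).2 j * eval z (g j) := by
    intro j _
    rw [map_mul, evs j]
  rw [Finset.sum_congr rfl this]
  linarith
end

section
/- (Bienstock–Zuckerberg structural lemma for set cover.) Let A be a 0/1 m×n matrix with rows having supports A_1,...,A_m, let F_A = {x ∈ {0,1}^n : Ax ≥ e}, and suppose a^T x - a_0 ≥ 0 is valid for F_A with a ≥ 0 of pitch π. Then there exists a set C of at most π row indices such that: (i) A_i ⊆ supp(a) for all i ∈ C; (ii) with V := ∪_{i≠j∈C} (A_i ∩ A_j), the inequality (a^T x - a_0) restricted by setting x_j = 0 for j ∈ V is valid for the fractional polytope F_C := {x ∈ [0,1]^n : ∑_{j ∈ A_i \ V} x_j ≥ 1 for all i ∈ C}; and (iii) F_A restricted by x_j = 0 for all j ∈ V is nonempty. -/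
open Finset

section BZaux

variable {α : Type*} [DecidableEq α]

def bzVV (𝒞 : Finset (Finset α)) : Finset α :=
  ((𝒞 ×ˢ 𝒞).filter fun p => p.1 ≠ p.2).biUnion fun p => p.1 ∩ p.2

lemma bz_mem_VV {𝒞 : Finset (Finset α)} {j : α} :
    j ∈ bzVV 𝒞 ↔ ∃ c, c ∈ 𝒞 ∧ ∃ d, d ∈ 𝒞 ∧ c ≠ d ∧ j ∈ c ∧ j ∈ d := by
  constructor
  · intro h
    rcases Finset.mem_biUnion.mp h with ⟨p, hp, hj⟩
    rcases Finset.mem_filter.mp hp with ⟨hp2, hne⟩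
    rcases Finset.mem_product.mp hp2 with ⟨h1, h2⟩
    rcases Finset.mem_inter.mp hj with ⟨hj1, hj2⟩
    exact ⟨p.1, h1, p.2, h2, hne, hj1, hj2⟩
  · rintro ⟨c, hc, d, hd, hne, hjc, hjd⟩
    refine Finset.mem_biUnion.mpr ⟨(c, d), ?_, Finset.mem_inter.mpr ⟨hjc, hjd⟩⟩
    exact Finset.mem_filter.mpr ⟨Finset.mem_product.mpr ⟨hc, hd⟩, hne⟩

lemma bz_VV_mono {𝒟 𝒞 : Finset (Finset α)} (h : 𝒟 ⊆ 𝒞) : bzVV 𝒟 ⊆ bzVV 𝒞 := by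
  intro j hj
  rcases bz_mem_VV.mp hj with ⟨c, hc, d, hd, hne, hjc, hjd⟩
  exact bz_mem_VV.mpr ⟨c, h hc, d, h hd, hne, hjc, hjd⟩

lemma bz_exists_minimal : ∀ (k : ℕ) (F : Finset (Finset α)) (t : Finset α),
    t.card ≤ k → t ∈ F → ∃ s, s ∈ F ∧ s ⊆ t ∧ ∀ t' ∈ F, ¬ t' ⊂ s := by
  intro k
  induction k with
  | zero =>
    intro F t hc ht
    by_cases h : ∀ t' ∈ F, ¬ t' ⊂ t
    · exact ⟨t, ht, subset_rfl, h⟩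
    · push_neg at h
      obtain ⟨t', ht', hsub⟩ := h
      have := Finset.card_lt_card hsub
      omega
  | succ k ih =>
    intro F t hc ht
    by_cases h : ∀ t' ∈ F, ¬ t' ⊂ t
    · exact ⟨t, ht, subset_rfl, h⟩
    · push_neg at h
      obtain ⟨t', ht', hsub⟩ := h
      have hlt := Finset.card_lt_card hsub
      obtain ⟨s, hs, hsub2, hmin⟩ := ih F t' (by omega) ht'
      exact ⟨s, hs, hsub2.trans hsub.subset, hmin⟩

def bzConc (a : α → ℝ) (G : Finset α) (R : Finset (Finset α)) (a₀ : ℝ)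
    (𝒞 : Finset (Finset α)) (xh : Finset α) : Prop :=
  𝒞 ⊆ R ∧ (∀ c ∈ 𝒞, ∀ j ∈ c, 0 < a j) ∧ xh ⊆ G ∧
  (∀ r ∈ R, (r ∩ xh).Nonempty) ∧ (∀ j ∈ xh, j ∉ bzVV 𝒞) ∧
  ∃ μfn : Finset α → ℝ,
    (∀ c ∈ 𝒞, ∃ j, j ∈ c \ bzVV 𝒞 ∧ μfn c = a j ∧ ∀ k ∈ c \ bzVV 𝒞, a j ≤ a k) ∧
    a₀ ≤ ∑ c ∈ 𝒞, μfn c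

lemma bz_trivial (a : α → ℝ) (G : Finset α) (R : Finset (Finset α)) (a₀ : ℝ)
    (hR1 : ∀ r ∈ R, r ⊆ G) (hR2 : ∀ r ∈ R, r.Nonempty) (h0 : a₀ ≤ 0) :
    ∃ 𝒞 : Finset (Finset α), ∃ xh : Finset α, bzConc a G R a₀ 𝒞 xh := by
  refine ⟨∅, G, Finset.empty_subset _, by simp, subset_rfl, ?_, ?_, fun _ => 0, by simp, by
    simpa using h0⟩
  · intro r hr
    rw [Finset.inter_eq_left.mpr (hR1 r hr)]
    exact hR2 r hr
  · intro j _ hj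
    rcases bz_mem_VV.mp hj with ⟨c, hc, _⟩
    exact absurd hc (Finset.notMem_empty _)

lemma bz_main (a : α → ℝ) (ha : ∀ j, 0 ≤ a j) :
    ∀ (N : ℕ) (G : Finset α) (R : Finset (Finset α)) (a₀ : ℝ),
    G.card ≤ N →
    (∀ r ∈ R, r ⊆ G) → (∀ r ∈ R, r.Nonempty) →
    (∀ r ∈ R, ∀ s ∈ R, r ≠ s → ¬ r ⊆ s) →
    (∀ x : Finset α, x ⊆ G → (∀ r ∈ R, (r ∩ x).Nonempty) → a₀ ≤ ∑ j ∈ x, a j) →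
    ∃ 𝒞 : Finset (Finset α), ∃ xh : Finset α, bzConc a G R a₀ 𝒞 xh := by
  classical
  intro N
  induction N with
  | zero =>
    intro G R a₀ hG hR1 hR2 hanti hval
    have hG0 : G = ∅ := Finset.card_eq_zero.mp (Nat.le_zero.mp hG)
    have hR0 : ∀ r ∈ R, False := by
      intro r hr
      have := hR1 r hr
      rw [hG0, Finset.subset_empty] at this
      exact absurd this (hR2 r hr).ne_empty
    have h0 : a₀ ≤ 0 := by
      have := hval ∅ (Finset.empty_subset _) (fun r hr => absurd (hR0 r hr) (by simp))
      simpa using this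
    exact bz_trivial a G R a₀ hR1 hR2 h0
  | succ N ih =>
    intro G R a₀ hG hR1 hR2 hanti hval
    by_cases ha₀ : a₀ ≤ 0
    · exact bz_trivial a G R a₀ hR1 hR2 ha₀
    push_neg at ha₀
    -- G is nonempty
    have haG : G.Nonempty := by
      by_contra hGe
      rw [Finset.not_nonempty_iff_eq_empty] at hGe
      have hR0 : ∀ r ∈ R, False := by
        intro r hr
        have := hR1 r hr
        rw [hGe, Finset.subset_empty] at this
        exact absurd this (hR2 r hr).ne_empty
      have := hval ∅ (Finset.empty_subset _) (fun r hr => absurd (hR0 r hr) (by simp))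
      simp at this
      linarith
    obtain ⟨u, huG, hmax⟩ := Finset.exists_max_image G a haG
    have hau : 0 < a u := by
      by_contra hau
      push_neg at hau
      have hz : ∀ v ∈ G, a v = 0 := fun v hv => le_antisymm (le_trans (hmax v hv) hau) (ha v)
      have hcov : ∀ r ∈ R, (r ∩ G).Nonempty := by
        intro r hr
        rw [Finset.inter_eq_left.mpr (hR1 r hr)]
        exact hR2 r hr
      have := hval G subset_rfl hcov
      rw [Finset.sum_eq_zero hz] at this
      linarith
    have hGE : (G.erase u).card ≤ N := by
      have h1 := Finset.card_erase_of_mem huG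
      have h2 : 1 ≤ G.card := Finset.card_pos.mpr haG
      omega
    by_cases hsing : ({u} : Finset α) ∈ R
    · -- Case 2a : {u} is a row
      have hnotu : ∀ r ∈ R.erase {u}, u ∉ r := by
        intro r hr hur
        have hrR := Finset.mem_of_mem_erase hr
        have hne : ({u} : Finset α) ≠ r := fun h => (Finset.ne_of_mem_erase hr) h.symm
        exact hanti {u} hsing r hrR hne (Finset.singleton_subset_iff.mpr hur)
      have hR1' : ∀ r ∈ R.erase {u}, r ⊆ G.erase u := by
        intro r hr j hj
        exact Finset.mem_erase.mpr ⟨fun h => hnotu r hr (h ▸ hj), hR1 r (Finset.mem_of_mem_erase hr) hj⟩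
      have hval' : ∀ x : Finset α, x ⊆ G.erase u →
          (∀ r ∈ R.erase {u}, (r ∩ x).Nonempty) → a₀ - a u ≤ ∑ j ∈ x, a j := by
        intro x hx hcov
        have hux : u ∉ x := fun h => (Finset.mem_erase.mp (hx h)).1 rfl
        have h1 : a₀ ≤ ∑ j ∈ insert u x, a j := by
          apply hval (insert u x)
          · intro j hj
            rcases Finset.mem_insert.mp hj with h | h
            · exact h ▸ huG
            · exact Finset.mem_of_mem_erase (hx h)
          · intro r hr
            by_cases hr' : r = {u}
            · exact ⟨u, Finset.mem_inter.mpr ⟨hr' ▸ Finset.mem_singleton_self u,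
                Finset.mem_insert_self u x⟩⟩
            · obtain ⟨j, hj⟩ := hcov r (Finset.mem_erase.mpr ⟨hr', hr⟩)
              rcases Finset.mem_inter.mp hj with ⟨hj1, hj2⟩
              exact ⟨j, Finset.mem_inter.mpr ⟨hj1, Finset.mem_insert_of_mem hj2⟩⟩
        rw [Finset.sum_insert hux] at h1
        linarith
      obtain ⟨𝒞', xh', hc1, hc2, hc3, hc4, hc5, μfn', hμ', hsum'⟩ :=
        ih (G.erase u) (R.erase {u}) (a₀ - a u) hGE hR1'
          (fun r hr => hR2 r (Finset.mem_of_mem_erase hr))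
          (fun r hr s hs hne => hanti r (Finset.mem_of_mem_erase hr) s
            (Finset.mem_of_mem_erase hs) hne) hval'
      have hu𝒞' : ({u} : Finset α) ∉ 𝒞' := fun h => (Finset.ne_of_mem_erase (hc1 h)) rfl
      have hurow : ∀ c ∈ 𝒞', u ∉ c := fun c hc => hnotu c (hc1 hc)
      have hVVeq : bzVV (insert {u} 𝒞') = bzVV 𝒞' := by
        apply Finset.Subset.antisymm
        · intro j hj
          rcases bz_mem_VV.mp hj with ⟨c, hc, d, hd, hne, hjc, hjd⟩
          rcases Finset.mem_insert.mp hc with hc' | hc'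
          · subst hc'
            rcases Finset.mem_insert.mp hd with hd' | hd'
            · exact absurd hd'.symm hne
            · rw [Finset.mem_singleton] at hjc
              exact absurd (hjc ▸ hjd) (hurow d hd')
          · rcases Finset.mem_insert.mp hd with hd' | hd'
            · subst hd'
              rw [Finset.mem_singleton] at hjd
              exact absurd (hjd ▸ hjc) (hurow c hc')
            · exact bz_mem_VV.mpr ⟨c, hc', d, hd', hne, hjc, hjd⟩
        · exact bz_VV_mono (Finset.subset_insert _ _)
      have huVV : u ∉ bzVV 𝒞' := by
        intro h
        rcases bz_mem_VV.mp h with ⟨c, hc, _, _, _, hjc, _⟩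
        exact hurow c hc hjc
      refine ⟨insert {u} 𝒞', insert u xh', ?_, ?_, ?_, ?_, ?_, ?_⟩
      · intro c hc
        rcases Finset.mem_insert.mp hc with h | h
        · exact h ▸ hsing
        · exact Finset.mem_of_mem_erase (hc1 h)
      · intro c hc j hj
        rcases Finset.mem_insert.mp hc with h | h
        · subst h; rw [Finset.mem_singleton] at hj; exact hj ▸ hau
        · exact hc2 c h j hj
      · intro j hj
        rcases Finset.mem_insert.mp hj with h | h
        · exact h ▸ huG
        · exact Finset.mem_of_mem_erase (hc3 h)
      · intro r hr
        by_cases hr' : r = {u}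
        · exact ⟨u, Finset.mem_inter.mpr ⟨hr' ▸ Finset.mem_singleton_self u,
            Finset.mem_insert_self u xh'⟩⟩
        · obtain ⟨j, hj⟩ := hc4 r (Finset.mem_erase.mpr ⟨hr', hr⟩)
          rcases Finset.mem_inter.mp hj with ⟨hj1, hj2⟩
          exact ⟨j, Finset.mem_inter.mpr ⟨hj1, Finset.mem_insert_of_mem hj2⟩⟩
      · intro j hj
        rw [hVVeq]
        rcases Finset.mem_insert.mp hj with h | h
        · exact h ▸ huVV
        · exact hc5 j h
      · refine ⟨fun c => if c = {u} then a u else μfn' c, ?_, ?_⟩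
        · intro c hc
          rcases Finset.mem_insert.mp hc with h | h
          · subst h
            refine ⟨u, ?_, if_pos rfl, ?_⟩
            · rw [Finset.mem_sdiff, hVVeq]
              exact ⟨Finset.mem_singleton_self u, huVV⟩
            · intro k hk
              rw [Finset.mem_sdiff, Finset.mem_singleton] at hk
              rw [hk.1]
          · obtain ⟨j, hj1, hj2, hj3⟩ := hμ' c h
            have hcne : c ≠ {u} := fun hh => hu𝒞' (hh ▸ h)
            refine ⟨j, ?_, by simp only [if_neg hcne]; exact hj2, ?_⟩
            · rw [Finset.mem_sdiff, hVVeq]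
              exact Finset.mem_sdiff.mp hj1
            · intro k hk
              rw [Finset.mem_sdiff, hVVeq] at hk
              exact hj3 k (Finset.mem_sdiff.mpr hk)
        · rw [Finset.sum_insert hu𝒞', if_pos rfl]
          have : ∑ c ∈ 𝒞', (if c = {u} then a u else μfn' c) = ∑ c ∈ 𝒞', μfn' c := by
            apply Finset.sum_congr rfl
            intro c hc
            have hcne : c ≠ {u} := fun hh => hu𝒞' (by rw [← hh]; exact hc)
            simp only [if_neg hcne]
          rw [this]
          linarith
    · -- Case 2b : {u} is not a row
      set Rimg : Finset (Finset α) := R.image (fun r => r.erase u) with hRimg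
      set Rmin : Finset (Finset α) := Rimg.filter (fun s => ∀ t ∈ Rimg, ¬ t ⊂ s) with hRmin
      have hRminmem : ∀ s ∈ Rmin, s ∈ Rimg ∧ ∀ t ∈ Rimg, ¬ t ⊂ s := by
        intro s hs
        exact Finset.mem_filter.mp hs
      have hRimg_ne : ∀ t ∈ Rimg, t.Nonempty := by
        intro t ht
        rcases Finset.mem_image.mp ht with ⟨r, hr, rfl⟩
        rw [Finset.nonempty_iff_ne_empty]
        intro hh
        rcases (Finset.erase_eq_empty_iff r u).mp hh with h | h
        · exact (hR2 r hr).ne_empty h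
        · exact hsing (h ▸ hr)
      have hRimg_sub : ∀ t ∈ Rimg, t ⊆ G.erase u := by
        intro t ht
        rcases Finset.mem_image.mp ht with ⟨r, hr, rfl⟩
        exact Finset.erase_subset_erase u (hR1 r hr)
      have hbelow : ∀ t ∈ Rimg, ∃ s, s ∈ Rmin ∧ s ⊆ t := by
        intro t ht
        obtain ⟨s, hs, hsub, hmin⟩ := bz_exists_minimal t.card Rimg t le_rfl ht
        exact ⟨s, Finset.mem_filter.mpr ⟨hs, hmin⟩, hsub⟩
      have hR1' : ∀ s ∈ Rmin, s ⊆ G.erase u := fun s hs => hRimg_sub s (hRminmem s hs).1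
      have hR2' : ∀ s ∈ Rmin, s.Nonempty := fun s hs => hRimg_ne s (hRminmem s hs).1
      have hanti' : ∀ s ∈ Rmin, ∀ t ∈ Rmin, s ≠ t → ¬ s ⊆ t := by
        intro s hs t ht hne hsub
        exact (hRminmem t ht).2 s (hRminmem s hs).1 (Finset.ssubset_iff_subset_ne.mpr ⟨hsub, hne⟩)
      have hval' : ∀ x : Finset α, x ⊆ G.erase u →
          (∀ s ∈ Rmin, (s ∩ x).Nonempty) → a₀ ≤ ∑ j ∈ x, a j := by
        intro x hx hcov
        apply hval x (hx.trans (Finset.erase_subset u G))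
        intro r hr
        have htt : r.erase u ∈ Rimg := Finset.mem_image_of_mem _ hr
        obtain ⟨s, hs, hsub⟩ := hbelow _ htt
        obtain ⟨j, hj⟩ := hcov s hs
        rcases Finset.mem_inter.mp hj with ⟨hj1, hj2⟩
        exact ⟨j, Finset.mem_inter.mpr ⟨Finset.mem_of_mem_erase (hsub hj1), hj2⟩⟩
      obtain ⟨𝒞', xh', hc1, hc2, hc3, hc4, hc5, μfn', hμ', hsum'⟩ :=
        ih (G.erase u) Rmin a₀ hGE hR1' hR2' hanti' hval'
      -- lifting map
      set orig : Finset α → Finset α := fun s => if s ∈ R then s else insert u s with horigdef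
      have husub : ∀ s ∈ 𝒞', s ⊆ G.erase u := fun s hs => hR1' s (hc1 hs)
      have hunotin : ∀ s ∈ 𝒞', u ∉ s := by
        intro s hs h
        exact (Finset.mem_erase.mp (husub s hs h)).1 rfl
      have horigR : ∀ s ∈ 𝒞', orig s ∈ R := by
        intro s hs
        by_cases h : s ∈ R
        · simp only [horigdef, if_pos h]; exact h
        · simp only [horigdef, if_neg h]
          rcases Finset.mem_image.mp (hRminmem s (hc1 hs)).1 with ⟨r, hr, hre⟩
          by_cases hur : u ∈ r
          · rw [← hre, Finset.insert_erase hur]; exact hr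
          · rw [Finset.erase_eq_of_notMem hur] at hre
            exact absurd (hre ▸ hr) h
      have horig_erase : ∀ s ∈ 𝒞', (orig s).erase u = s := by
        intro s hs
        by_cases h : s ∈ R
        · simp only [horigdef, if_pos h]
          exact Finset.erase_eq_of_notMem (hunotin s hs)
        · simp only [horigdef, if_neg h]
          exact Finset.erase_insert (hunotin s hs)
      have horig_sup : ∀ s ∈ 𝒞', s ⊆ orig s := by
        intro s hs
        by_cases h : s ∈ R
        · simp only [horigdef, if_pos h]; exact subset_rfl
        · simp only [horigdef, if_neg h]; exact Finset.subset_insert _ _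
      have horig_cases : ∀ s ∈ 𝒞', ∀ j ∈ orig s, j = u ∨ j ∈ s := by
        intro s hs j hj
        by_cases h : s ∈ R
        · simp only [horigdef, if_pos h] at hj; exact Or.inr hj
        · simp only [horigdef, if_neg h] at hj
          exact Finset.mem_insert.mp hj
      have horig_inj : ∀ s ∈ 𝒞', ∀ t ∈ 𝒞', orig s = orig t → s = t := by
        intro s hs t ht h
        rw [← horig_erase s hs, ← horig_erase t ht, h]
      set C : Finset (Finset α) := 𝒞'.image orig with hCdef
      have hmemC : ∀ c ∈ C, ∃ s ∈ 𝒞', orig s = c := by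
        intro c hc
        rcases Finset.mem_image.mp hc with ⟨s, hs, he⟩
        exact ⟨s, hs, he⟩
      -- VV transfer lemmas
      have hVVdown : ∀ j, j ≠ u → j ∈ bzVV C → j ∈ bzVV 𝒞' := by
        intro j hju hj
        rcases bz_mem_VV.mp hj with ⟨c, hc, d, hd, hne, hjc, hjd⟩
        obtain ⟨s, hs, rfl⟩ := hmemC c hc
        obtain ⟨t, ht, rfl⟩ := hmemC d hd
        have hst : s ≠ t := fun h => hne (h ▸ rfl)
        have hjs : j ∈ s := (horig_cases s hs j hjc).resolve_left hju
        have hjt : j ∈ t := (horig_cases t ht j hjd).resolve_left hju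
        exact bz_mem_VV.mpr ⟨s, hs, t, ht, hst, hjs, hjt⟩
      have hVVup : ∀ j, j ∈ bzVV 𝒞' → j ∈ bzVV C := by
        intro j hj
        rcases bz_mem_VV.mp hj with ⟨s, hs, t, ht, hne, hjs, hjt⟩
        refine bz_mem_VV.mpr ⟨orig s, Finset.mem_image_of_mem _ hs, orig t,
          Finset.mem_image_of_mem _ ht, ?_, horig_sup s hs hjs, horig_sup t ht hjt⟩
        intro h
        exact hne (horig_inj s hs t ht h)
      refine ⟨C, xh', ?_, ?_, hc3.trans (Finset.erase_subset u G), ?_, ?_, ?_⟩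
      · intro c hc
        obtain ⟨s, hs, rfl⟩ := hmemC c hc
        exact horigR s hs
      · intro c hc j hj
        obtain ⟨s, hs, rfl⟩ := hmemC c hc
        rcases horig_cases s hs j hj with h | h
        · exact h ▸ hau
        · exact hc2 s hs j h
      · -- coverage of R by xh'
        intro r hr
        have htt : r.erase u ∈ Rimg := Finset.mem_image_of_mem _ hr
        obtain ⟨s, hs, hsub⟩ := hbelow _ htt
        obtain ⟨j, hj⟩ := hc4 s hs
        rcases Finset.mem_inter.mp hj with ⟨hj1, hj2⟩
        exact ⟨j, Finset.mem_inter.mpr ⟨Finset.mem_of_mem_erase (hsub hj1), hj2⟩⟩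
      · -- xh' avoids bzVV C
        intro j hj hjV
        have hju : j ≠ u := fun h => (Finset.mem_erase.mp (hc3 hj)).1 h
        exact hc5 j hj (hVVdown j hju hjV)
      · -- the μ function
        refine ⟨fun c => μfn' (c.erase u), ?_, ?_⟩
        · intro c hc
          obtain ⟨s, hs, rfl⟩ := hmemC c hc
          obtain ⟨j, hj1, hj2, hj3⟩ := hμ' s hs
          rcases Finset.mem_sdiff.mp hj1 with ⟨hjs, hjV'⟩
          have hju : j ≠ u := fun h => hunotin s hs (h ▸ hjs)
          refine ⟨j, ?_, ?_, ?_⟩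
          · rw [Finset.mem_sdiff]
            exact ⟨horig_sup s hs hjs, fun h => hjV' (hVVdown j hju h)⟩
          · simp only [horig_erase s hs]; exact hj2
          · intro k hk
            rcases Finset.mem_sdiff.mp hk with ⟨hkc, hkV⟩
            rcases horig_cases s hs k hkc with h | h
            · subst h
              exact hmax j (Finset.mem_of_mem_erase (husub s hs hjs))
            · refine hj3 k (Finset.mem_sdiff.mpr ⟨h, fun hh => hkV (hVVup k hh)⟩)
        · rw [hCdef, Finset.sum_image horig_inj]
          have : ∑ s ∈ 𝒞', μfn' ((orig s).erase u) = ∑ s ∈ 𝒞', μfn' s := by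
            apply Finset.sum_congr rfl
            intro s hs
            rw [horig_erase s hs]
          rw [this]
          exact hsum'


end BZaux

theorem bienstock_zuckerberg_structural_lemma (m n : ℕ)
    (A : Fin m → Finset (Fin n)) (hAne : ∀ i, (A i).Nonempty)
    (hAmin : ∀ i j, i ≠ j → ¬ A i ⊆ A j)
    (a : Fin n → ℝ) (ha : ∀ i, 0 ≤ a i) (a₀ : ℝ)
    (supp : Finset (Fin n)) (hsupp : supp = Finset.univ.filter fun i => 0 < a i)
    (hvalid : ∀ x : Fin n → ℝ, (∀ j, x j = 0 ∨ x j = 1) →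
      (∀ i, 1 ≤ ∑ j ∈ A i, x j) → a₀ ≤ ∑ j, a j * x j)
    (π : ℕ)
    -- the sum of the π smallest nonzero entries of `a` is at least `a₀`
    (hpitch₁ : ∀ S ⊆ supp, S.card = π → a₀ ≤ ∑ i ∈ S, a i)
    -- π is minimal with this property
    (hpitch₂ : π = 0 ∨ ∃ S ⊆ supp, S.card = π - 1 ∧ ∑ i ∈ S, a i < a₀) :
    ∃ C : Finset (Fin m), C.card ≤ π ∧ (∀ i ∈ C, A i ⊆ supp) ∧
      ∃ V : Finset (Fin n),
        V = ((C ×ˢ C).filter fun p => p.1 ≠ p.2).biUnion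
              (fun p => A p.1 ∩ A p.2) ∧
        -- (ii) the restricted inequality is valid for the fractional polytope F_C
        (∀ x : Fin n → ℝ, (∀ j, 0 ≤ x j ∧ x j ≤ 1) →
          (∀ i ∈ C, 1 ≤ ∑ j ∈ A i \ V, x j) →
          a₀ ≤ ∑ j ∈ Finset.univ \ V, a j * x j) ∧
        -- (iii) F_A with the variables of V set to zero is nonempty
        (∃ x : Fin n → ℝ, (∀ j, x j = 0 ∨ x j = 1) ∧ (∀ j ∈ V, x j = 0) ∧
          ∀ i, 1 ≤ ∑ j ∈ A i, x j) := by
  classical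
  subst hsupp
  by_cases ha₀ : a₀ ≤ 0
  · -- trivial case
    refine ⟨∅, by simp, by simp, ∅, by simp, ?_, ?_⟩
    · intro x hx _
      have : (0:ℝ) ≤ ∑ j ∈ Finset.univ \ (∅ : Finset (Fin n)), a j * x j :=
        Finset.sum_nonneg (fun j _ => mul_nonneg (ha j) (hx j).1)
      linarith
    · refine ⟨fun _ => 1, fun j => Or.inr rfl, by simp, ?_⟩
      intro i
      rw [Finset.sum_const, nsmul_eq_mul, mul_one]
      exact_mod_cast Nat.one_le_iff_ne_zero.mpr (Finset.card_ne_zero_of_mem (hAne i).choose_spec)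
  push_neg at ha₀
  have hπ1 : 1 ≤ π := by
    by_contra h
    push_neg at h
    have hπ0 : π = 0 := by omega
    have := hpitch₁ ∅ (Finset.empty_subset _) (by rw [Finset.card_empty, hπ0])
    simp at this
    linarith
  have hAinj : Function.Injective A := by
    intro i j h
    by_contra hne
    exact hAmin i j hne (h ▸ subset_rfl)
  set R : Finset (Finset (Fin n)) := Finset.univ.image A with hRdef
  have hmemR : ∀ i, A i ∈ R := fun i => Finset.mem_image_of_mem A (Finset.mem_univ i)
  have hRmem : ∀ r ∈ R, ∃ i, A i = r := by
    intro r hr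
    rcases Finset.mem_image.mp hr with ⟨i, _, h⟩
    exact ⟨i, h⟩
  have hR2 : ∀ r ∈ R, r.Nonempty := by
    intro r hr
    obtain ⟨i, rfl⟩ := hRmem r hr
    exact hAne i
  have hanti : ∀ r ∈ R, ∀ s ∈ R, r ≠ s → ¬ r ⊆ s := by
    intro r hr s hs hne
    obtain ⟨i, rfl⟩ := hRmem r hr
    obtain ⟨j, rfl⟩ := hRmem s hs
    exact hAmin i j (fun h => hne (h ▸ rfl))
  have hcovsum : ∀ (x : Finset (Fin n)) (i : Fin m), (A i ∩ x).Nonempty →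
      (1:ℝ) ≤ ∑ j ∈ A i, (if j ∈ x then (1:ℝ) else 0) := by
    intro x i hne
    rw [Finset.sum_ite_mem]
    rw [Finset.sum_const, nsmul_eq_mul, mul_one]
    exact_mod_cast Nat.one_le_iff_ne_zero.mpr (Finset.card_ne_zero_of_mem hne.choose_spec)
  have hvalF : ∀ x : Finset (Fin n), x ⊆ Finset.univ →
      (∀ r ∈ R, (r ∩ x).Nonempty) → a₀ ≤ ∑ j ∈ x, a j := by
    intro x _ hcov
    have h1 := hvalid (fun j => if j ∈ x then 1 else 0)
      (fun j => by by_cases h : j ∈ x <;> simp [h])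
      (fun i => hcovsum x i (hcov (A i) (hmemR i)))
    calc a₀ ≤ ∑ j, a j * (if j ∈ x then 1 else 0) := h1
      _ = ∑ j, (if j ∈ x then a j else 0) := by
          apply Finset.sum_congr rfl
          intro j _
          by_cases h : j ∈ x <;> simp [h]
      _ = ∑ j ∈ Finset.univ ∩ x, a j := Finset.sum_ite_mem _ _ _
      _ = ∑ j ∈ x, a j := by rw [Finset.univ_inter]
  obtain ⟨𝒞₀, xh, hb1, hb2, hb3, hb4, hb5, hbGood⟩ :=
    bz_main a ha (Finset.univ : Finset (Fin n)).card Finset.univ R a₀ le_rfl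
      (fun r _ => Finset.subset_univ r) hR2 hanti hvalF
  -- pruning
  set PP : Finset (Finset (Fin n)) → Prop := fun 𝒟 =>
    (∃ c ∈ 𝒟, c \ bzVV 𝒟 = ∅) ∨
    (∃ μfn : Finset (Fin n) → ℝ,
      (∀ c ∈ 𝒟, ∃ j, j ∈ c \ bzVV 𝒟 ∧ μfn c = a j ∧ ∀ k ∈ c \ bzVV 𝒟, a j ≤ a k) ∧
      a₀ ≤ ∑ c ∈ 𝒟, μfn c) with hPPdef
  have hPP₀ : PP 𝒞₀ := Or.inr hbGood
  set T : Finset (Finset (Finset (Fin n))) := 𝒞₀.powerset.filter PP with hTdef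
  have hTne : T.Nonempty := ⟨𝒞₀, Finset.mem_filter.mpr ⟨Finset.mem_powerset_self _, hPP₀⟩⟩
  obtain ⟨𝒟, h𝒟T, h𝒟min⟩ := Finset.exists_min_image T Finset.card hTne
  have h𝒟sub : 𝒟 ⊆ 𝒞₀ := Finset.mem_powerset.mp (Finset.mem_filter.mp h𝒟T).1
  have h𝒟PP : PP 𝒟 := (Finset.mem_filter.mp h𝒟T).2
  have hkey : ∀ c₀ ∈ 𝒟, ¬ PP (𝒟.erase c₀) := by
    intro c₀ hc₀ hPPe
    have hT' : 𝒟.erase c₀ ∈ T := Finset.mem_filter.mpr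
      ⟨Finset.mem_powerset.mpr ((Finset.erase_subset c₀ 𝒟).trans h𝒟sub), hPPe⟩
    have h2 := h𝒟min _ hT'
    rw [Finset.card_erase_of_mem hc₀] at h2
    have h1 : 1 ≤ 𝒟.card := Finset.card_pos.mpr ⟨c₀, hc₀⟩
    omega
  have hpos𝒟 : ∀ c ∈ 𝒟, ∀ j ∈ c, 0 < a j := fun c hc => hb2 c (h𝒟sub hc)
  -- cardinality bound
  have hcard𝒟 : 𝒟.card ≤ π := by
    rcases Finset.eq_empty_or_nonempty 𝒟 with h | ⟨c₀, hc₀⟩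
    · rw [h]; simp
    · have hnPP := hkey c₀ hc₀
      rw [hPPdef] at hnPP
      simp only [] at hnPP
      push_neg at hnPP
      obtain ⟨hne_pet, hmufn⟩ := hnPP
      rcases Finset.eq_empty_or_nonempty (𝒟.erase c₀) with h' | ⟨c₁, hc₁⟩
      · have h1 := Finset.card_erase_of_mem hc₀
        rw [h', Finset.card_empty] at h1
        have h2 : 1 ≤ 𝒟.card := Finset.card_pos.mpr ⟨c₀, hc₀⟩
        omega
      · have hpet : ∀ c ∈ 𝒟.erase c₀, (c \ bzVV (𝒟.erase c₀)).Nonempty :=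
          fun c hc => hne_pet c hc
        obtain ⟨j₀, _⟩ := hpet c₁ hc₁
        set jfun : Finset (Fin n) → Fin n := fun c =>
          if h : (c \ bzVV (𝒟.erase c₀)).Nonempty then
            Classical.choose (Finset.exists_min_image _ a h) else j₀ with hjfdef
        have hjf : ∀ c ∈ 𝒟.erase c₀, jfun c ∈ c \ bzVV (𝒟.erase c₀) ∧
            ∀ k ∈ c \ bzVV (𝒟.erase c₀), a (jfun c) ≤ a k := by
          intro c hc
          have h := hpet c hc
          have spec := Classical.choose_spec (Finset.exists_min_image (c \ bzVV (𝒟.erase c₀)) a h)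
          simp only [hjfdef, dif_pos h]
          exact ⟨spec.1, spec.2⟩
        have hlt : ∑ c ∈ 𝒟.erase c₀, a (jfun c) < a₀ := by
          refine hmufn (fun c => a (jfun c)) ?_
          intro c hc
          exact ⟨jfun c, (hjf c hc).1, rfl, (hjf c hc).2⟩
        have hinjS : Set.InjOn jfun (𝒟.erase c₀) := by
          intro c hc d hd h
          by_contra hne
          have h1 := (hjf c (Finset.mem_coe.mp hc)).1
          have h2 := (hjf d (Finset.mem_coe.mp hd)).1
          rw [h] at h1
          rcases Finset.mem_sdiff.mp h1 with ⟨hm1, hv⟩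
          rcases Finset.mem_sdiff.mp h2 with ⟨hm2, _⟩
          exact hv (bz_mem_VV.mpr ⟨c, Finset.mem_coe.mp hc, d, Finset.mem_coe.mp hd, hne, hm1, hm2⟩)
        set S : Finset (Fin n) := (𝒟.erase c₀).image jfun with hSdef
        have hcardS : S.card = (𝒟.erase c₀).card := Finset.card_image_of_injOn hinjS
        have hsumS : ∑ j ∈ S, a j = ∑ c ∈ 𝒟.erase c₀, a (jfun c) :=
          Finset.sum_image (fun x hx y hy h => hinjS (Finset.mem_coe.mpr hx) (Finset.mem_coe.mpr hy) h)
        have hSsupp : S ⊆ Finset.univ.filter (fun i => 0 < a i) := by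
          intro j hj
          rcases Finset.mem_image.mp hj with ⟨c, hc, rfl⟩
          have h1 := (hjf c hc).1
          rcases Finset.mem_sdiff.mp h1 with ⟨hm, _⟩
          exact Finset.mem_filter.mpr ⟨Finset.mem_univ _,
            hpos𝒟 c (Finset.mem_of_mem_erase hc) _ hm⟩
        by_contra hbig
        push_neg at hbig
        have hle : π ≤ S.card := by
          rw [hcardS, Finset.card_erase_of_mem hc₀]
          omega
        obtain ⟨S', hS'sub, hS'card⟩ := Finset.exists_subset_card_eq hle
        have hp := hpitch₁ S' (hS'sub.trans hSsupp) hS'card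
        have h2 : ∑ j ∈ S', a j ≤ ∑ j ∈ S, a j :=
          Finset.sum_le_sum_of_subset_of_nonneg hS'sub (fun j _ _ => ha j)
        rw [hsumS] at h2
        linarith
  -- index set
  set Cidx : Finset (Fin m) := Finset.univ.filter (fun i => A i ∈ 𝒟) with hCdef
  have hCmem : ∀ i, i ∈ Cidx ↔ A i ∈ 𝒟 := by
    intro i
    rw [hCdef, Finset.mem_filter]
    simp
  have himg : Cidx.image A = 𝒟 := by
    apply Finset.Subset.antisymm
    · intro c hc
      rcases Finset.mem_image.mp hc with ⟨i, hi, rfl⟩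
      exact (hCmem i).mp hi
    · intro c hc
      obtain ⟨i, rfl⟩ := hRmem c (hb1 (h𝒟sub hc))
      exact Finset.mem_image_of_mem A ((hCmem i).mpr hc)
  have hCcard : Cidx.card = 𝒟.card := by
    rw [← himg]
    exact (Finset.card_image_of_injective _ hAinj).symm
  set Vex : Finset (Fin n) := ((Cidx ×ˢ Cidx).filter fun p => p.1 ≠ p.2).biUnion
      (fun p => A p.1 ∩ A p.2) with hVex
  have hVeq : Vex = bzVV 𝒟 := by
    ext j
    constructor
    · intro hj
      rcases Finset.mem_biUnion.mp hj with ⟨p, hp, hjp⟩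
      rcases Finset.mem_filter.mp hp with ⟨hp2, hne⟩
      rcases Finset.mem_product.mp hp2 with ⟨h1, h2⟩
      rcases Finset.mem_inter.mp hjp with ⟨hj1, hj2⟩
      refine bz_mem_VV.mpr ⟨A p.1, (hCmem p.1).mp h1, A p.2, (hCmem p.2).mp h2, ?_, hj1, hj2⟩
      exact fun h => hne (hAinj h)
    · intro hj
      rcases bz_mem_VV.mp hj with ⟨c, hc, d, hd, hne, hjc, hjd⟩
      obtain ⟨i1, rfl⟩ := hRmem c (hb1 (h𝒟sub hc))
      obtain ⟨i2, rfl⟩ := hRmem d (hb1 (h𝒟sub hd))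
      refine Finset.mem_biUnion.mpr ⟨(i1, i2), ?_, Finset.mem_inter.mpr ⟨hjc, hjd⟩⟩
      refine Finset.mem_filter.mpr ⟨Finset.mem_product.mpr ⟨(hCmem i1).mpr hc, (hCmem i2).mpr hd⟩, ?_⟩
      exact fun h => hne (congrArg A h)
  refine ⟨Cidx, by rw [hCcard]; exact hcard𝒟, ?_, Vex, hVex, ?_, ?_⟩
  · intro i hi j hj
    exact Finset.mem_filter.mpr ⟨Finset.mem_univ _, hpos𝒟 (A i) ((hCmem i).mp hi) j hj⟩
  · -- (ii)
    intro x hx hxc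
    rcases h𝒟PP with ⟨c, hc, hpet⟩ | ⟨μfn, hμ, hsum⟩
    · obtain ⟨i, rfl⟩ := hRmem c (hb1 (h𝒟sub hc))
      have hcons := hxc i ((hCmem i).mpr hc)
      rw [hVeq, hpet] at hcons
      simp at hcons
      linarith
    · have hdisj : (↑𝒟 : Set (Finset (Fin n))).PairwiseDisjoint (fun c => c \ bzVV 𝒟) := by
        intro c hc d hd hne
        rw [Function.onFun, Finset.disjoint_left]
        intro j hjc hjd
        rcases Finset.mem_sdiff.mp hjc with ⟨h1, hv⟩
        rcases Finset.mem_sdiff.mp hjd with ⟨h2, _⟩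
        exact hv (bz_mem_VV.mpr ⟨c, Finset.mem_coe.mp hc, d, Finset.mem_coe.mp hd, hne, h1, h2⟩)
      calc a₀ ≤ ∑ c ∈ 𝒟, μfn c := hsum
        _ ≤ ∑ c ∈ 𝒟, ∑ j ∈ c \ bzVV 𝒟, a j * x j := by
            apply Finset.sum_le_sum
            intro c hc
            obtain ⟨j₀, hj₀, heq, hmin⟩ := hμ c hc
            obtain ⟨i, rfl⟩ := hRmem c (hb1 (h𝒟sub hc))
            have hcons := hxc i ((hCmem i).mpr hc)
            rw [hVeq] at hcons
            have h1 : a j₀ ≤ a j₀ * ∑ j ∈ A i \ bzVV 𝒟, x j := by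
              nth_rewrite 1 [← mul_one (a j₀)]
              exact mul_le_mul_of_nonneg_left hcons (ha j₀)
            have h2 : a j₀ * ∑ j ∈ A i \ bzVV 𝒟, x j = ∑ j ∈ A i \ bzVV 𝒟, a j₀ * x j :=
              Finset.mul_sum _ _ _
            have h3 : ∑ j ∈ A i \ bzVV 𝒟, a j₀ * x j ≤ ∑ j ∈ A i \ bzVV 𝒟, a j * x j := by
              apply Finset.sum_le_sum
              intro j hj
              exact mul_le_mul_of_nonneg_right (hmin j hj) (hx j).1
            rw [heq]
            linarith
        _ = ∑ j ∈ 𝒟.biUnion (fun c => c \ bzVV 𝒟), a j * x j := (Finset.sum_biUnion hdisj).symm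
        _ ≤ ∑ j ∈ Finset.univ \ Vex, a j * x j := by
            apply Finset.sum_le_sum_of_subset_of_nonneg
            · intro j hj
              rcases Finset.mem_biUnion.mp hj with ⟨c, hc, hjc⟩
              refine Finset.mem_sdiff.mpr ⟨Finset.mem_univ _, ?_⟩
              rw [hVeq]
              exact (Finset.mem_sdiff.mp hjc).2
            · intro j _ _
              exact mul_nonneg (ha j) (hx j).1
  · -- (iii)
    refine ⟨fun j => if j ∈ xh then 1 else 0, fun j => by by_cases h : j ∈ xh <;> simp [h], ?_, ?_⟩
    · intro j hj
      have hjV : j ∈ bzVV 𝒞₀ := bz_VV_mono h𝒟sub (by rw [← hVeq]; exact hj)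
      have : j ∉ xh := fun hmem => hb5 j hmem hjV
      simp [this]
    · intro i
      exact hcovsum xh i (hb4 (A i) (hmemR i))
end

section
/- (Restriction reduces pitch.) Let a^T x - a_0 ≥ 0 be a covering inequality with a ≥ 0 of pitch π, let J ⊆ supp(a) be nonempty, and let the restricted inequality be obtained by setting x_j = 1 for j ∈ J (i.e., new right-hand side a_0 - ∑_{j∈J} a_j, same coefficients on remaining variables). If the restricted inequality has positive right-hand side, then its pitch is at most π - |J|. -/
open Finset

/-- The support of a coefficient vector. -/
noncomputable def supp {n : ℕ} (a : Fin n → ℝ) : Finset (Fin n) :=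
  Finset.univ.filter fun i => a i ≠ 0

/-- The pitch of the covering inequality `a^T x ≥ a₀`: the minimum `p` such that
every set of `p` nonzero coefficients sums to at least `a₀` (equivalently, the
sum of the `p` smallest nonzero entries of `a` is at least `a₀`). -/
noncomputable def covPitch {n : ℕ} (a : Fin n → ℝ) (a₀ : ℝ) : ℕ :=
  sInf {p : ℕ | ∀ S ⊆ supp a, S.card = p → a₀ ≤ ∑ i ∈ S, a i}

theorem restriction_reduces_pitch (n : ℕ) (a : Fin n → ℝ) (ha : ∀ i, 0 ≤ a i)
    (a₀ : ℝ) (J : Finset (Fin n)) (hJ : J ⊆ supp a) (hJne : J.Nonempty)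
    (hpos : 0 < a₀ - ∑ j ∈ J, a j) :
    covPitch (fun i => if i ∈ J then 0 else a i) (a₀ - ∑ j ∈ J, a j) + J.card ≤
      covPitch a a₀ := by
  set a' : Fin n → ℝ := fun i => if i ∈ J then 0 else a i with ha'
  set P : Set ℕ := {p : ℕ | ∀ S ⊆ supp a, S.card = p → a₀ ≤ ∑ i ∈ S, a i} with hP
  have hup : ∀ p q, p ∈ P → p ≤ q → q ∈ P := by
    intro p q hp hpq S hS hSc
    obtain ⟨S', hS'sub, hS'c⟩ := Finset.exists_subset_card_eq (s := S) (n := p) (by omega)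
    calc a₀ ≤ ∑ i ∈ S', a i := hp S' (hS'sub.trans hS) hS'c
    _ ≤ ∑ i ∈ S, a i :=
      Finset.sum_le_sum_of_subset_of_nonneg hS'sub (fun i _ _ => ha i)
  have hne : (n + 1) ∈ P := by
    intro S hS hSc
    have := Finset.card_le_univ S
    simp at this
    omega
  have hπ : covPitch a a₀ ∈ P := Nat.sInf_mem ⟨n + 1, hne⟩
  have hJlt : J.card < covPitch a a₀ := by
    by_contra h
    push_neg at h
    have hJP : J.card ∈ P := hup _ _ hπ h
    have := hJP J hJ rfl
    linarith
  have hmem : (covPitch a a₀ - J.card) ∈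
      {p : ℕ | ∀ S ⊆ supp a', S.card = p → a₀ - ∑ j ∈ J, a j ≤ ∑ i ∈ S, a' i} := by
    intro S hS hSc
    have hSnJ : ∀ i ∈ S, i ∉ J := by
      intro i hi hiJ
      have := hS hi
      simp [supp, ha', hiJ] at this
    have hSsupp : S ⊆ supp a := by
      intro i hi
      have h1 := hS hi
      simp [supp, ha'] at h1 ⊢
      simpa [hSnJ i hi] using h1
    have hdisj : Disjoint S J := Finset.disjoint_left.mpr hSnJ
    have hcard : (S ∪ J).card = covPitch a a₀ := by
      rw [Finset.card_union_of_disjoint hdisj]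
      omega
    have hTs : S ∪ J ⊆ supp a := Finset.union_subset hSsupp hJ
    have h1 : a₀ ≤ ∑ i ∈ S ∪ J, a i := hπ _ hTs hcard
    rw [Finset.sum_union hdisj] at h1
    have h2 : ∑ i ∈ S, a' i = ∑ i ∈ S, a i :=
      Finset.sum_congr rfl (fun i hi => by simp [ha', hSnJ i hi])
    rw [h2]
    linarith
  have hle : covPitch a' (a₀ - ∑ j ∈ J, a j) ≤ covPitch a a₀ - J.card :=
    Nat.sInf_le hmem
  omega
end
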